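/- Let Y = ({T, S}, φ) be an unordered tanglegram, with leaves of T and S identified with {1,...,n} so A(T), A(S) ≤ S_n and φ ∈ S_n. There exists an automorphism of Y switching the two trees if and only if T and S are isomorphic and φ·A(T)·φ ∩ A(T) ≠ ∅ (as subsets of S_n, after identifying A(S) with A(T) via a tree isomorphism). -/

import Mathlib

/-- Given trees T, S with leaves marked by `Fin n`, the set of permutations of the
leaf markers induced by graph isomorphisms T → S. For T = S (same markings) this is
the leaf automorphism group A(T). -/
def leafIso {VT VS : Type*} [Fintype VT] [Fintype VS] [DecidableEq VT] [DecidableEq VS]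
    (T : SimpleGraph VT) (S : SimpleGraph VS) [DecidableRel T.Adj] [DecidableRel S.Adj]
    {n : ℕ} (mT : Fin n ≃ {v : VT // T.degree v = 1})
    (mS : Fin n ≃ {v : VS // S.degree v = 1}) : Set (Equiv.Perm (Fin n)) :=
  {π | ∃ e : VT ≃ VS, (∀ u v, S.Adj (e u) (e v) ↔ T.Adj u v) ∧
    ∀ i, e (mT i) = (mS (π i) : VS)}

lemma leafIso_one {VT : Type*} [Fintype VT] [DecidableEq VT]
    (T : SimpleGraph VT) [DecidableRel T.Adj]
    {n : ℕ} (mT : Fin n ≃ {v : VT // T.degree v = 1}) :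
    (1 : Equiv.Perm (Fin n)) ∈ leafIso T T mT mT :=
  ⟨Equiv.refl VT, fun _ _ => Iff.rfl, fun _ => rfl⟩

lemma leafIso_inv {VT VS : Type*} [Fintype VT] [Fintype VS] [DecidableEq VT] [DecidableEq VS]
    (T : SimpleGraph VT) (S : SimpleGraph VS) [DecidableRel T.Adj] [DecidableRel S.Adj]
    {n : ℕ} (mT : Fin n ≃ {v : VT // T.degree v = 1})
    (mS : Fin n ≃ {v : VS // S.degree v = 1}) {π : Equiv.Perm (Fin n)}
    (h : π ∈ leafIso T S mT mS) : π⁻¹ ∈ leafIso S T mS mT := by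
  obtain ⟨e, he, he2⟩ := h
  refine ⟨e.symm, fun u v => ?_, fun i => ?_⟩
  · rw [← he (e.symm u) (e.symm v)]; simp
  · have := he2 (π⁻¹ i)
    simp only [show π (π⁻¹ i) = i from (Equiv.eq_symm_apply π).mp rfl] at this
    rw [← this, Equiv.symm_apply_apply]

lemma leafIso_mul {VT VS VR : Type*} [Fintype VT] [Fintype VS] [Fintype VR]
    [DecidableEq VT] [DecidableEq VS] [DecidableEq VR]
    (T : SimpleGraph VT) (S : SimpleGraph VS) (R : SimpleGraph VR)
    [DecidableRel T.Adj] [DecidableRel S.Adj] [DecidableRel R.Adj]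
    {n : ℕ} (mT : Fin n ≃ {v : VT // T.degree v = 1})
    (mS : Fin n ≃ {v : VS // S.degree v = 1})
    (mR : Fin n ≃ {v : VR // R.degree v = 1})
    {σ τ : Equiv.Perm (Fin n)}
    (hσ : σ ∈ leafIso S R mS mR) (hτ : τ ∈ leafIso T S mT mS) :
    σ * τ ∈ leafIso T R mT mR := by
  obtain ⟨f, hf, hf2⟩ := hσ
  obtain ⟨e, he, he2⟩ := hτ
  refine ⟨e.trans f, fun u v => (hf (e u) (e v)).trans (he u v), fun i => ?_⟩
  simp only [Equiv.trans_apply, he2, hf2]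
  rfl

/-- an unordered tanglegram Y = ({T,S}, φ) admits an automorphism
switching the two trees — i.e. a pair of isomorphisms g₁ : T → S, g₂ : S → T with
g₁ = φ ∘ g₂ ∘ φ on the leaf markers — if and only if T and S are isomorphic (via some
isomorphism ψ) and, after identifying A(S) with A(T) via ψ (which turns φ into
ψ⁻¹ ∘ φ), we have φ·A(T)·φ ∩ A(T) ≠ ∅. -/
theorem stmt_13 {VT VS : Type*} [Fintype VT] [Fintype VS] [DecidableEq VT]
    [DecidableEq VS] (T : SimpleGraph VT) (S : SimpleGraph VS)
    [DecidableRel T.Adj] [DecidableRel S.Adj]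
    (hT : T.IsTree) (hS : S.IsTree) {n : ℕ}
    (mT : Fin n ≃ {v : VT // T.degree v = 1}) (mS : Fin n ≃ {v : VS // S.degree v = 1})
    (φ : Equiv.Perm (Fin n)) :
    (∃ g₁ g₂ : Equiv.Perm (Fin n), g₁ ∈ leafIso T S mT mS ∧ g₂ ∈ leafIso S T mS mT ∧
        g₁ = φ * g₂ * φ) ↔
      (∃ ψ ∈ leafIso T S mT mS, ∃ a ∈ leafIso T T mT mT,
        (ψ⁻¹ * φ) * a * (ψ⁻¹ * φ) ∈ leafIso T T mT mT) := by
  constructor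
  · rintro ⟨g₁, g₂, h₁, h₂, hg⟩
    refine ⟨g₁, h₁, 1, leafIso_one T mT, ?_⟩
    have key : (g₁⁻¹ * φ) * 1 * (g₁⁻¹ * φ) = g₁⁻¹ * g₂⁻¹ := by
      subst hg; group
    rw [key]
    exact leafIso_mul T S T mT mS mT (leafIso_inv T S mT mS h₁)
      (leafIso_inv S T mS mT h₂)
  · rintro ⟨ψ, hψ, a, ha, hb⟩
    refine ⟨ψ * ((ψ⁻¹ * φ) * a * (ψ⁻¹ * φ)), a * ψ⁻¹,
      leafIso_mul T T S mT mT mS hψ hb,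
      leafIso_mul S T T mS mT mT ha (leafIso_inv T S mT mS hψ), ?_⟩
    group
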